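/- Let $A$ be a real $n\times n$ matrix with positive diagonal entries, nonpositive off-diagonal entries, and strictly positive column sums, i.e. $A_{jj} > \sum_{i \ne j} |A_{ij}|$ for every $j$. Let $K$ be the diagonal part of $A$ and $Q = K - A$, so that all entries of $Q$ are nonnegative. Then $A$ is invertible, the series $\sum_{k=0}^{\infty} (K^{-1} Q)^k K^{-1}$ converges, its sum equals $A^{-1}$, and all entries of $A^{-1}$ are nonnegative. -/

import Mathlib

open Matrix BigOperators

private lemma mat_entry_nonneg_mul {n : ℕ} {X Y : Matrix (Fin n) (Fin n) ℝ}
    (hX : ∀ i j, 0 ≤ X i j) (hY : ∀ i j, 0 ≤ Y i j) : ∀ i j, 0 ≤ (X * Y) i j := by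
  intro i j
  rw [Matrix.mul_apply]
  exact Finset.sum_nonneg fun l _ => mul_nonneg (hX i l) (hY l j)

private lemma mat_entry_nonneg_pow {n : ℕ} {M : Matrix (Fin n) (Fin n) ℝ}
    (hM : ∀ i j, 0 ≤ M i j) : ∀ k i j, 0 ≤ (M ^ k) i j := by
  intro k
  induction k with
  | zero =>
      intro i j
      rw [pow_zero]
      by_cases h : i = j <;> simp [Matrix.one_apply, h]
  | succ k ih =>
      rw [pow_succ]
      exact mat_entry_nonneg_mul ih hM

private lemma mat_colsum_pow_le {n : ℕ} {M : Matrix (Fin n) (Fin n) ℝ} {r : ℝ}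
    (hM : ∀ i j, 0 ≤ M i j) (hr : 0 ≤ r) (hcol : ∀ j, ∑ i, M i j ≤ r) :
    ∀ k j, ∑ i, (M ^ k) i j ≤ r ^ k := by
  intro k
  induction k with
  | zero =>
      intro j
      simp [Matrix.one_apply]
  | succ k ih =>
      intro j
      rw [pow_succ, pow_succ]
      calc ∑ i, (M ^ k * M) i j = ∑ l, (∑ i, (M ^ k) i l) * M l j := by
              simp_rw [Matrix.mul_apply, Finset.sum_mul]
              rw [Finset.sum_comm]
        _ ≤ ∑ l, r ^ k * M l j :=
              Finset.sum_le_sum fun l _ => mul_le_mul_of_nonneg_right (ih l) (hM l j)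
        _ = r ^ k * ∑ l, M l j := by rw [Finset.mul_sum]
        _ ≤ r ^ k * r := mul_le_mul_of_nonneg_left (hcol j) (pow_nonneg hr k)

theorem stmt3 {n : ℕ} (A : Matrix (Fin n) (Fin n) ℝ)
    (hdiag : ∀ i, 0 < A i i)
    (hoff : ∀ i j, i ≠ j → A i j ≤ 0)
    (hdom : ∀ j, ∑ i ∈ Finset.univ.erase j, |A i j| < A j j)
    (K Q : Matrix (Fin n) (Fin n) ℝ)
    (hK : K = Matrix.diagonal fun i => A i i)
    (hQdef : Q = K - A) :
    IsUnit A ∧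
    Summable (fun k : ℕ => (K⁻¹ * Q) ^ k * K⁻¹) ∧
    (∑' k : ℕ, (K⁻¹ * Q) ^ k * K⁻¹) = A⁻¹ ∧
    (∀ i j, 0 ≤ A⁻¹ i j) := by
  rcases Nat.eq_zero_or_pos n with hn | hn
  · subst hn
    haveI : Subsingleton (Matrix (Fin 0) (Fin 0) ℝ) :=
      inferInstanceAs (Subsingleton (Fin 0 → Fin 0 → ℝ))
    refine ⟨⟨⟨A, A, Subsingleton.elim _ _, Subsingleton.elim _ _⟩, rfl⟩, ?_, Subsingleton.elim _ _,
      fun i => i.elim0⟩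
    have : (fun k : ℕ => (K⁻¹ * Q) ^ k * K⁻¹) = fun _ => (0 : Matrix (Fin 0) (Fin 0) ℝ) :=
      funext fun k => Subsingleton.elim _ _
    rw [this]
    exact summable_zero
  haveI : Nonempty (Fin n) := ⟨⟨0, hn⟩⟩
  have hAne : ∀ i, A i i ≠ 0 := fun i => (hdiag i).ne'
  set D : Matrix (Fin n) (Fin n) ℝ := Matrix.diagonal fun i => (A i i)⁻¹ with hD
  have hKD : K * D = 1 := by
    rw [hK, hD, Matrix.diagonal_mul_diagonal]
    convert Matrix.diagonal_one using 2
    funext i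
    exact mul_inv_cancel₀ (hAne i)
  have hKinv : K⁻¹ = D := Matrix.inv_eq_right_inv hKD
  have hQnn : ∀ i j, 0 ≤ Q i j := by
    intro i j
    rw [hQdef, hK, Matrix.sub_apply]
    by_cases h : i = j
    · subst h; rw [Matrix.diagonal_apply_eq]; simp
    · rw [Matrix.diagonal_apply_ne _ h]
      simpa using hoff i j h
  have hQdiag : ∀ j, Q j j = 0 := by
    intro j
    rw [hQdef, hK, Matrix.sub_apply, Matrix.diagonal_apply_eq, sub_self]
  set M : Matrix (Fin n) (Fin n) ℝ := Q * K⁻¹ with hM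
  have hMentry : ∀ i j, M i j = Q i j * (A j j)⁻¹ := by
    intro i j
    rw [hM, hKinv, hD, Matrix.mul_diagonal]
  have hMnn : ∀ i j, 0 ≤ M i j := fun i j => by
    rw [hMentry]; exact mul_nonneg (hQnn i j) (inv_nonneg.mpr (hdiag j).le)
  have hcol : ∀ j, ∑ i, M i j < 1 := by
    intro j
    have hQsum : ∑ i, Q i j = ∑ i ∈ Finset.univ.erase j, |A i j| := by
      rw [← Finset.add_sum_erase _ _ (Finset.mem_univ j), hQdiag, zero_add]
      refine Finset.sum_congr rfl fun i hi => ?_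
      have hij : i ≠ j := Finset.ne_of_mem_erase hi
      rw [hQdef, hK, Matrix.sub_apply, Matrix.diagonal_apply_ne _ hij, zero_sub,
        abs_of_nonpos (hoff i j hij)]
    have : ∑ i, M i j = (∑ i, Q i j) * (A j j)⁻¹ := by
      simp_rw [hMentry, Finset.sum_mul]
    rw [this, hQsum, ← div_eq_mul_inv]
    exact (div_lt_one (hdiag j)).mpr (hdom j)
  set r : ℝ := Finset.univ.sup' Finset.univ_nonempty (fun j => ∑ i, M i j) with hr
  have hrle : ∀ j, ∑ i, M i j ≤ r := by
    intro j
    rw [hr]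
    exact Finset.le_sup' (fun j => ∑ i, M i j) (Finset.mem_univ j)
  have hr1 : r < 1 := by
    rw [hr]
    exact (Finset.sup'_lt_iff Finset.univ_nonempty).mpr fun j _ => hcol j
  have hr0 : 0 ≤ r := by
    obtain ⟨j⟩ := (inferInstance : Nonempty (Fin n))
    exact le_trans (Finset.sum_nonneg fun i _ => hMnn i j) (hrle j)
  -- entry bounds for powers of M
  have hpowle : ∀ (k : ℕ) (i j : Fin n), (M ^ k) i j ≤ r ^ k := by
    intro k i j
    calc (M ^ k) i j ≤ ∑ i', (M ^ k) i' j :=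
          Finset.single_le_sum (fun i' _ => mat_entry_nonneg_pow hMnn k i' j) (Finset.mem_univ i)
      _ ≤ r ^ k := mat_colsum_pow_le hMnn hr0 hrle k j
  -- rewrite the terms of the series
  have hsc : SemiconjBy K⁻¹ M (K⁻¹ * Q) := by
    unfold SemiconjBy
    rw [hM, mul_assoc]
  have hfk : ∀ k : ℕ, (K⁻¹ * Q) ^ k * K⁻¹ = K⁻¹ * M ^ k := fun k => (hsc.pow_right k).symm
  have hentry : ∀ (k : ℕ) (i j : Fin n),
      ((K⁻¹ * Q) ^ k * K⁻¹) i j = (A i i)⁻¹ * (M ^ k) i j := by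
    intro k i j
    rw [hfk, hKinv, hD, Matrix.diagonal_mul]
  have hentrynn : ∀ (k : ℕ) (i j : Fin n), 0 ≤ ((K⁻¹ * Q) ^ k * K⁻¹) i j := by
    intro k i j
    rw [hentry]
    exact mul_nonneg (inv_nonneg.mpr (hdiag i).le) (mat_entry_nonneg_pow hMnn k i j)
  -- summability
  have hsummable : Summable (fun k : ℕ => (K⁻¹ * Q) ^ k * K⁻¹) := by
    refine Pi.summable.mpr ?_
    intro i
    rw [Pi.summable]
    intro j
    refine Summable.of_nonneg_of_le (fun k => hentrynn k i j) (fun k => ?_)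
      ((summable_geometric_of_lt_one hr0 hr1).mul_left ((A i i)⁻¹))
    rw [hentry]
    exact mul_le_mul_of_nonneg_left (hpowle k i j) (inv_nonneg.mpr (hdiag i).le)
  -- partial sums
  have hAK : A * K⁻¹ = 1 - M := by
    have : A = K - Q := by rw [hQdef, sub_sub_cancel]
    rw [this, Matrix.sub_mul, hKinv, hKD, hM, hKinv]
  have hpartial : ∀ N : ℕ,
      A * (∑ k ∈ Finset.range N, (K⁻¹ * Q) ^ k * K⁻¹) = 1 - M ^ N := by
    intro N
    rw [Finset.mul_sum]
    have : ∀ k : ℕ, A * ((K⁻¹ * Q) ^ k * K⁻¹) = (1 - M) * M ^ k := by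
      intro k
      rw [hfk, ← mul_assoc, hAK]
    simp_rw [this]
    rw [← Finset.mul_sum, mul_neg_geom_sum]
  -- limits
  have hMpow0 : Filter.Tendsto (fun N : ℕ => M ^ N) Filter.atTop (nhds 0) := by
    refine tendsto_pi_nhds.mpr ?_
    intro i
    rw [tendsto_pi_nhds]
    intro j
    have h0 : (0 : Matrix (Fin n) (Fin n) ℝ) i j = 0 := rfl
    rw [h0]
    refine squeeze_zero (fun N => mat_entry_nonneg_pow hMnn N i j) (fun N => hpowle N i j) ?_
    exact tendsto_pow_atTop_nhds_zero_of_lt_one hr0 hr1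
  set S : Matrix (Fin n) (Fin n) ℝ := ∑' k : ℕ, (K⁻¹ * Q) ^ k * K⁻¹ with hS
  have hAS : A * S = 1 := by
    have h1 : Filter.Tendsto
        (fun N : ℕ => A * (∑ k ∈ Finset.range N, (K⁻¹ * Q) ^ k * K⁻¹))
        Filter.atTop (nhds (A * S)) :=
      (hsummable.hasSum.tendsto_sum_nat).const_mul A
    have h2 : Filter.Tendsto
        (fun N : ℕ => A * (∑ k ∈ Finset.range N, (K⁻¹ * Q) ^ k * K⁻¹))
        Filter.atTop (nhds 1) := by
      simp_rw [hpartial]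
      have := (tendsto_const_nhds (x := (1 : Matrix (Fin n) (Fin n) ℝ))).sub hMpow0
      simpa using this
    exact tendsto_nhds_unique h1 h2
  have hSA : S * A = 1 := mul_eq_one_comm.mp hAS
  have hinv : A⁻¹ = S := Matrix.inv_eq_right_inv hAS
  refine ⟨⟨⟨A, S, hAS, hSA⟩, rfl⟩, hsummable, hinv.symm, ?_⟩
  intro i j
  rw [hinv]
  have h1 : S i j = ∑' k : ℕ, ((K⁻¹ * Q) ^ k * K⁻¹) i j := by
    rw [hS]
    exact (congrFun (tsum_apply hsummable) j).trans (tsum_apply (Pi.summable.mp hsummable i))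
  rw [h1]
  exact tsum_nonneg fun k => hentrynn k i j
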